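/- Let G be a transitive permutation group on a finite set Ω, let ω ∈ Ω, and suppose N is a normal subgroup of the point stabilizer G_ω such that ω is the unique fixed point of N on Ω. Then the maximum number of pairwise coprime non-trivial subdegrees of G is at most μ(N), where μ(N) is the maximal size of a family of proper subgroups of N with pairwise coprime indices. -/

import Mathlib

open MulAction Subgroup

/-- If `N` is normal, then the relative index `[N : K ⊓ N]` divides `[G : K]`. -/
private lemma relindex_dvd_index_of_normal_right {G : Type*} [Group G] (K N : Subgroup G)
    [N.Normal] : K.relIndex N ∣ K.index := by
  classical
  have hB : IsBlock G (orbit N ((1 : G) : G ⧸ K)) := IsBlock.orbit_of_normal _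
  have hdvd := hB.ncard_dvd_card ⟨_, mem_orbit_self _⟩
  have hstab : stabilizer N ((1 : G) : G ⧸ K) = K.subgroupOf N := by
    ext n
    rw [mem_stabilizer_iff, mem_subgroupOf]
    erw [Subgroup.smul_def, MulAction.Quotient.smul_mk,
      QuotientGroup.eq]
    simp
  have horb : (orbit N ((1 : G) : G ⧸ K)).ncard = K.relIndex N := by
    rw [← index_stabilizer, hstab, relIndex]
  exact horb ▸ hdvd

/-- Let `G` be transitive on a finite set `Ω`, `ω ∈ Ω`, and let
`N` be a normal subgroup of the stabilizer `G_ω` whose unique fixed point on `Ω` is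
`ω`.  If every family of proper subgroups of `N` with pairwise coprime indices has
size at most `μ` (i.e. `μ(N) ≤ μ`), then any family of points whose
`G_ω`-orbits have pairwise coprime sizes, all bigger than `1`, has size at most `μ`:
the number of pairwise coprime non-trivial subdegrees of `G` is at most `μ(N)`. -/
theorem stmt13 {G Ω : Type*} [Group G] [MulAction G Ω] [Finite Ω]
    [MulAction.IsPretransitive G Ω] (ω : Ω)
    (N : Subgroup (MulAction.stabilizer G ω)) (hN : N.Normal)
    (hfix : ∀ α : Ω, (∀ g : N, ((g : MulAction.stabilizer G ω) : G) • α = α) → α = ω)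
    (μ : ℕ)
    (hμ : ∀ (s : ℕ) (B : Fin s → Subgroup N),
      (∀ i, B i ≠ ⊤) → (∀ i j, i ≠ j → Nat.Coprime (B i).index (B j).index) → s ≤ μ)
    (t : ℕ) (α : Fin t → Ω)
    (hsize : ∀ i, 1 < Nat.card (MulAction.orbit (MulAction.stabilizer G ω) (α i)))
    (hcop : ∀ i j, i ≠ j →
      Nat.Coprime (Nat.card (MulAction.orbit (MulAction.stabilizer G ω) (α i)))
        (Nat.card (MulAction.orbit (MulAction.stabilizer G ω) (α j)))) :
    t ≤ μ := by
  classical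
  haveI := hN
  let B : Fin t → Subgroup N := fun i =>
    (MulAction.stabilizer (MulAction.stabilizer G ω) (α i)).subgroupOf N
  have hidx : ∀ i, (B i).index ∣
      Nat.card (orbit (MulAction.stabilizer G ω) (α i)) := by
    intro i
    have h2 := relindex_dvd_index_of_normal_right
      (MulAction.stabilizer (MulAction.stabilizer G ω) (α i)) N
    rwa [index_stabilizer, ← Nat.card_coe_set_eq] at h2
  apply hμ t B
  · intro i hi
    have hαω : α i = ω := by
      apply hfix
      intro g
      have hg := mem_subgroupOf.mp (hi.symm ▸ mem_top g : g ∈ B i)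
      simpa [MulAction.mem_stabilizer_iff, Subgroup.smul_def] using hg
    have h1 := hsize i
    rw [hαω] at h1
    have horb : orbit (MulAction.stabilizer G ω) ω = {ω} := by
      apply Set.eq_singleton_iff_unique_mem.mpr
      refine ⟨mem_orbit_self _, ?_⟩
      rintro x ⟨h, rfl⟩
      exact mem_stabilizer_iff.mp h.2
    rw [horb] at h1
    simp at h1
  · intro i j hij
    exact Nat.Coprime.coprime_dvd_left (hidx i)
      (Nat.Coprime.coprime_dvd_right (hidx j) (hcop i j hij))
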